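/- Let D be a digraph on n ≥ 3 vertices containing a cycle C_m of some length m with 2 ≤ m ≤ n−1, and let x be a vertex of D not contained in this cycle. If d(x, C_m) ≥ m+1, then D contains a cycle C_k of length k for every k with 2 ≤ k ≤ m+1. -/

import Mathlib

variable {V : Type*}

/-- Rotate an index of `Fin m` forward by `k` steps (indices mod `m`). -/
def finRot {m : ℕ} (i : Fin m) (k : ℕ) : Fin m :=
  ⟨(i.val + k) % m, Nat.mod_lt _ (Nat.lt_of_le_of_lt (Nat.zero_le i.val) i.isLt)⟩

/-- `c : Fin k → V` is a directed cycle of length `k`: distinct vertices with an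
arc from each vertex to the next one (cyclically). -/
def IsCycle (A : V → V → Prop) {k : ℕ} (c : Fin k → V) : Prop :=
  Function.Injective c ∧ ∀ i, A (c i) (c (finRot i 1))

/-- Out-degree of `x`. -/
def outDeg [Fintype V] (A : V → V → Prop) [DecidableRel A] (x : V) : ℕ :=
  (Finset.univ.filter fun y => A x y).card

/-- In-degree of `x`. -/
def inDeg [Fintype V] (A : V → V → Prop) [DecidableRel A] (x : V) : ℕ :=
  (Finset.univ.filter fun y => A y x).card

/-- Degree of `x`. -/
def deg [Fintype V] (A : V → V → Prop) [DecidableRel A] (x : V) : ℕ :=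
  outDeg A x + inDeg A x

/-- Out-degree of `x` into the set `S`. -/
def outDegOn (A : V → V → Prop) [DecidableRel A] (x : V) (S : Finset V) : ℕ :=
  (S.filter fun y => A x y).card

/-- In-degree of `x` from the set `S`. -/
def inDegOn (A : V → V → Prop) [DecidableRel A] (x : V) (S : Finset V) : ℕ :=
  (S.filter fun y => A y x).card

/-- Degree of `x` with respect to the set `S`. -/
def degOn (A : V → V → Prop) [DecidableRel A] (x : V) (S : Finset V) : ℕ :=
  outDegOn A x S + inDegOn A x S

/-- The set of indices of the subpath of a cycle on `Fin m` that goes from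
index `β` to index `α` (inclusive), following the orientation of the cycle. -/
def cycSeg {m : ℕ} (β α : Fin m) : Finset (Fin m) :=
  (Finset.range ((α.val + m - β.val) % m + 1)).image (finRot β)

/-- Lemma 1, Häggkvist–Thomassen. If a digraph on `n ≥ 3` vertices
contains a cycle `C_m` (`2 ≤ m ≤ n-1`) and a vertex `x` off the cycle with
`d(x, C_m) ≥ m+1`, then it contains a cycle of every length `k` with `2 ≤ k ≤ m+1`. -/
theorem cycles_of_all_lengths_of_large_degree_on_cycle
    [Fintype V] [DecidableEq V] (A : V → V → Prop) [DecidableRel A]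
    (hirr : ∀ v : V, ¬ A v v)
    (hn : 3 ≤ Fintype.card V)
    (m : ℕ) (hm2 : 2 ≤ m) (hm : m ≤ Fintype.card V - 1)
    (c : Fin m → V) (hc : IsCycle A c)
    (x : V) (hx : ∀ i : Fin m, x ≠ c i)
    (hdeg : m + 1 ≤ degOn A x (Finset.image c Finset.univ)) :
    ∀ k : ℕ, 2 ≤ k → k ≤ m + 1 → ∃ d : Fin k → V, IsCycle A d := by
  intro k hk2 hkm
  obtain ⟨hcinj, hcarc⟩ := hc
  haveI : NeZero m := ⟨by omega⟩
  set t := k - 2 with ht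
  -- degree count in terms of index sets
  have h1 : outDegOn A x (Finset.image c Finset.univ)
      = (Finset.univ.filter fun i : Fin m => A x (c i)).card := by
    unfold outDegOn
    rw [Finset.filter_image, Finset.card_image_of_injective _ hcinj]
  have h2 : inDegOn A x (Finset.image c Finset.univ)
      = (Finset.univ.filter fun i : Fin m => A (c i) x).card := by
    unfold inDegOn
    rw [Finset.filter_image, Finset.card_image_of_injective _ hcinj]
  have hcard : m + 1 ≤ (Finset.univ.filter fun i : Fin m => A x (c i)).card
      + (Finset.univ.filter fun i : Fin m => A (c i) x).card := by
    have := hdeg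
    unfold degOn at this
    omega
  -- the shifted in-set has the same cardinality
  open Fin.NatCast in
  have hshift : ∀ i : Fin m, finRot i t = i + (t : Fin m) := by
    intro i
    ext
    simp [finRot, Fin.add_def, Fin.val_natCast, Nat.add_mod_mod]
  open Fin.NatCast in
  have hTQ : (Finset.univ.filter fun i : Fin m => A (c (finRot i t)) x).card
      = (Finset.univ.filter fun i : Fin m => A (c i) x).card := by
    have : (Finset.univ.filter fun i : Fin m => A (c (finRot i t)) x)
        = (Finset.univ.filter fun i : Fin m => A (c i) x).image
            (fun i => i - (t : Fin m)) := by
      ext i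
      simp only [Finset.mem_filter, Finset.mem_image, Finset.mem_univ, true_and]
      constructor
      · intro h
        exact ⟨i + (t : Fin m), by rwa [hshift] at h, by simp⟩
      · rintro ⟨b, hb, rfl⟩
        rwa [hshift, sub_add_cancel]
    rw [this, Finset.card_image_of_injective _ (sub_left_injective)]
  -- pigeonhole: find j with x → c j and c (j + t) → x
  have hex : ∃ j : Fin m, A x (c j) ∧ A (c (finRot j t)) x := by
    by_contra hcon
    push_neg at hcon
    have hdisj : Disjoint (Finset.univ.filter fun i : Fin m => A x (c i))
        (Finset.univ.filter fun i : Fin m => A (c (finRot i t)) x) := by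
      rw [Finset.disjoint_left]
      intro a ha hb
      simp only [Finset.mem_filter] at ha hb
      exact hcon a ha.2 hb.2
    have hle := Finset.card_le_univ
      ((Finset.univ.filter fun i : Fin m => A x (c i))
        ∪ (Finset.univ.filter fun i : Fin m => A (c (finRot i t)) x))
    rw [Finset.card_union_of_disjoint hdisj] at hle
    simp only [Finset.card_univ, Fintype.card_fin] at hle
    omega
  obtain ⟨j, hj1, hj2⟩ := hex
  -- composition lemma for finRot
  have hcomp : ∀ (a b : ℕ), finRot (finRot j a) b = finRot j (a + b) := by
    intro a b
    ext
    simp [finRot, Nat.mod_add_mod, Nat.add_assoc]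
  have hj0 : finRot j 0 = j := by
    ext
    simp [finRot, Nat.mod_eq_of_lt j.isLt]
  -- build the cycle of length k
  refine ⟨fun i => if i.val = 0 then x else c (finRot j (i.val - 1)), ?_, ?_⟩
  · intro a b hab
    by_cases ha : a.val = 0 <;> by_cases hb : b.val = 0
    · exact Fin.ext (ha.trans hb.symm)
    · simp only [ha, if_pos rfl, if_neg hb] at hab
      exact absurd hab (hx _)
    · simp only [hb, if_pos rfl, if_neg ha] at hab
      exact absurd hab.symm (hx _)
    · simp only [if_neg ha, if_neg hb] at hab
      have heq := hcinj hab
      have hv : (j.val + (a.val - 1)) % m = (j.val + (b.val - 1)) % m :=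
        congrArg Fin.val heq
      have ha1 : a.val - 1 < m := by have := a.isLt; omega
      have hb1 : b.val - 1 < m := by have := b.isLt; omega
      have : a.val - 1 = b.val - 1 := by
        have h := (Nat.ModEq.add_left_cancel' j.val hv.symm).symm
        unfold Nat.ModEq at h
        rwa [Nat.mod_eq_of_lt ha1, Nat.mod_eq_of_lt hb1] at h
      exact Fin.ext (by omega)
  · intro i
    beta_reduce
    by_cases hi0 : i.val = 0
    · have hnext : (finRot i 1).val = 1 := by
        simp [finRot, hi0, Nat.mod_eq_of_lt (by omega : 1 < k)]
      simp only [hi0, if_pos rfl, hnext, if_neg (by omega : (1:ℕ) ≠ 0)]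
      simpa [hj0] using hj1
    · by_cases hil : i.val = k - 1
      · have hnext : (finRot i 1).val = 0 := by
          simp [finRot, hil, Nat.sub_add_cancel (by omega : 1 ≤ k)]
        have ht1 : k - 1 - 1 = t := by omega
        rw [if_neg hi0, if_pos hnext, hil, ht1]
        exact hj2
      · have hlt : i.val + 1 < k := by have := i.isLt; omega
        have hnext : (finRot i 1).val = i.val + 1 := by
          simp [finRot, Nat.mod_eq_of_lt hlt]
        simp only [if_neg hi0, hnext, if_neg (by omega : i.val + 1 ≠ 0),
          Nat.add_sub_cancel]
        have harc := hcarc (finRot j (i.val - 1))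
        rwa [hcomp, Nat.sub_add_cancel (by omega : 1 ≤ i.val)] at harc
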